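/- Let X and Y be abelian Polish groups. If A ⊆ X is a Borel set belonging to F(X) (i.e., for every compact set K ⊆ X there exists x ∈ X with K + x ⊆ A) and B ⊆ Y is a Borel set which is not Haar meager in Y, then the product set A × B is not Haar meager in the product group X × Y. -/

import Mathlib

open MeasureTheory Set

/-- A set in a topological abelian group is *Haar meager* if there is a Borel set `B ⊇ A`,
a nonempty compact metric space `K` and a continuous `f : K → G` such that `f ⁻¹' (B + x)`
is meager in `K` for every `x ∈ G`. -/
def IsHaarMeager {G : Type*} [TopologicalSpace G] [AddCommGroup G] (A : Set G) : Prop :=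
  ∃ B : Set G, A ⊆ B ∧ MeasurableSet[borel G] B ∧
    ∃ (K : Type) (_ : MetricSpace K) (_ : CompactSpace K) (_ : Nonempty K) (f : K → G),
      Continuous f ∧ ∀ x : G, IsMeagre (f ⁻¹' ((fun b => b + x) '' B))

/-- A set in a topological abelian group is *Haar null* if there is a Borel probability
measure `μ` and a Borel set `B ⊇ A` with `μ (x + B) = 0` for every `x ∈ G`. -/
def IsHaarNull {G : Type*} [TopologicalSpace G] [AddCommGroup G] (A : Set G) : Prop :=
  ∃ μ : @Measure G (borel G), @IsProbabilityMeasure G (borel G) μ ∧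
    ∃ B : Set G, A ⊆ B ∧ MeasurableSet[borel G] B ∧
      ∀ x : G, μ ((fun b => x + b) '' B) = 0

/-- If `A ⊆ X` is a Borel set such that every compact set admits a translate inside `A`,
and `B ⊆ Y` is a Borel set which is not Haar meager, then `A × B` is not Haar meager
in `X × Y`. -/
theorem not_haarMeager_prod {X Y : Type*}
    [TopologicalSpace X] [AddCommGroup X] [IsTopologicalAddGroup X] [PolishSpace X]
    [TopologicalSpace Y] [AddCommGroup Y] [IsTopologicalAddGroup Y] [PolishSpace Y]
    (A : Set X) (B : Set Y)
    (hA : MeasurableSet[borel X] A)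
    (hAF : ∀ K : Set X, IsCompact K → ∃ x : X, (fun k => k + x) '' K ⊆ A)
    (hB : MeasurableSet[borel Y] B) (hBm : ¬ IsHaarMeager B) :
    ¬ IsHaarMeager (A ×ˢ B) := by
  intro h
  obtain ⟨D, hDsub, hDmeas, K, _, _, _, f, hf, hmeag⟩ := h
  -- translate the compact set `(Prod.fst ∘ f) '' univ` into `A`
  obtain ⟨x₀, hx₀⟩ := hAF ((Prod.fst ∘ f) '' univ)
    (isCompact_univ.image ((continuous_fst.comp hf)))
  apply hBm
  refine ⟨B, subset_rfl, hB, K, ‹_›, ‹_›, ‹_›, Prod.snd ∘ f, continuous_snd.comp hf, ?_⟩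
  intro y
  refine (hmeag (-x₀, y)).mono ?_
  intro k hk
  obtain ⟨b, hb, hby⟩ := hk
  refine mem_preimage.mpr ⟨((f k).1 + x₀, b), ?_, ?_⟩
  · exact hDsub ⟨hx₀ ⟨(f k).1, ⟨k, mem_univ k, rfl⟩, rfl⟩, hb⟩
  · ext
    · simp
    · simpa using hby
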